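/- Let N ≥ 1, let s ∈ (1, ∞) and let t satisfy 1 ≤ t ≤ s. Let (μ_n) be a sequence of measurable functions on ℝ^N that is bounded in L^s(ℝ^N) (i.e., sup_n ∫_{ℝ^N} |μ_n|^s dx < ∞) and converges almost everywhere to a function μ. Then lim_{n→∞} ∫_{ℝ^N} | |μ_n|^t − |μ_n − μ|^t − |μ|^t |^{s/t} dx = 0. -/

import Mathlib

open MeasureTheory Filter Topology
open scoped NNReal ENNReal

lemma BL_pow_add (t : ℝ) (ht : 1 ≤ t) {δ A B : ℝ} (hδ : 0 < δ) (hA : 0 ≤ A) (hB : 0 ≤ B) :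
    (A + B) ^ t ≤ (1 + δ) ^ t * A ^ t + (1 + 1/δ) ^ t * B ^ t := by
  have ht0 : (0:ℝ) ≤ t := le_trans zero_le_one ht
  rcases le_or_gt B (δ * A) with h | h
  · calc (A + B) ^ t ≤ ((1 + δ) * A) ^ t := by
          apply Real.rpow_le_rpow (by positivity) (by nlinarith) ht0
      _ = (1 + δ) ^ t * A ^ t := Real.mul_rpow (by positivity) hA
      _ ≤ _ := le_add_of_nonneg_right (by positivity)
  · have hA' : A ≤ B / δ := (le_div_iff₀ hδ).mpr (by nlinarith)
    have hBd : (1 + 1/δ) * B = B / δ + B := by ring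
    calc (A + B) ^ t ≤ ((1 + 1/δ) * B) ^ t := by
          apply Real.rpow_le_rpow (by positivity) (by rw [hBd]; linarith) ht0
      _ = (1 + 1/δ) ^ t * B ^ t := Real.mul_rpow (by positivity) hB
      _ ≤ _ := le_add_of_nonneg_left (by positivity)

lemma BL_eps (t : ℝ) (ht : 1 ≤ t) {ε : ℝ} (hε : 0 < ε) :
    ∃ C : ℝ, 0 ≤ C ∧ ∀ u v : ℝ, abs (|u + v| ^ t - |u| ^ t) ≤ ε * |u| ^ t + C * |v| ^ t := by
  have ht0 : (0:ℝ) < t := lt_of_lt_of_le zero_lt_one ht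
  set ε' : ℝ := min (ε/2) (1/2) with hε'def
  have hε'pos : 0 < ε' := lt_min (by linarith) (by norm_num)
  have hε'le : ε' ≤ ε := le_trans (min_le_left _ _) (by linarith)
  have hε'le2 : ε' ≤ 1/2 := min_le_right _ _
  set δ : ℝ := (1 + ε') ^ (1/t) - 1 with hδdef
  have h1ε : (0:ℝ) < 1 + ε' := by linarith
  have hδpos : 0 < δ := by
    have h2 : (1:ℝ) ^ (1/t) < (1 + ε') ^ (1/t) :=
      Real.rpow_lt_rpow (by norm_num) (by linarith) (by positivity)
    simp only [Real.one_rpow] at h2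
    simpa [hδdef] using sub_pos.mpr h2
  have hδpow : (1 + δ) ^ t = 1 + ε' := by
    rw [hδdef]
    have h3 : 1 + ((1 + ε') ^ (1/t) - 1) = (1 + ε') ^ (1/t) := by ring
    rw [h3, ← Real.rpow_mul (le_of_lt h1ε), one_div, inv_mul_cancel₀ (ne_of_gt ht0),
      Real.rpow_one]
  set C1 : ℝ := (1 + 1/δ) ^ t with hC1def
  have hC1 : 0 ≤ C1 := Real.rpow_nonneg (by positivity) _
  have key : ∀ a b : ℝ, |a + b| ^ t ≤ (1 + ε') * |a| ^ t + C1 * |b| ^ t := by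
    intro a b
    calc |a + b| ^ t ≤ (|a| + |b|) ^ t :=
          Real.rpow_le_rpow (abs_nonneg _) (abs_add_le _ _) (le_of_lt ht0)
      _ ≤ (1 + δ) ^ t * |a| ^ t + (1 + 1/δ) ^ t * |b| ^ t :=
          BL_pow_add t ht hδpos (abs_nonneg _) (abs_nonneg _)
      _ = (1 + ε') * |a| ^ t + C1 * |b| ^ t := by rw [hδpow]
  refine ⟨C1 * (1 + ε'), by positivity, fun u v => ?_⟩
  have hunn : (0:ℝ) ≤ |u| ^ t := Real.rpow_nonneg (abs_nonneg _) _
  have hvnn : (0:ℝ) ≤ |v| ^ t := Real.rpow_nonneg (abs_nonneg _) _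
  have huvnn : (0:ℝ) ≤ |u + v| ^ t := Real.rpow_nonneg (abs_nonneg _) _
  rw [abs_sub_le_iff]
  have hε'half : ε' ≤ ε/2 := min_le_left _ _
  have hee : ε' * (1 + ε') ≤ ε := by
    nlinarith [mul_le_mul_of_nonneg_left hε'le2 hε'pos.le]
  constructor
  · have := key u v
    nlinarith [mul_le_mul_of_nonneg_right hε'le hunn,
      mul_nonneg (mul_nonneg hε'pos.le hC1) hvnn]
  · have h1 : |u| ^ t ≤ (1 + ε') * |u + v| ^ t + C1 * |v| ^ t := by
      have := key (u + v) (-v)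
      simpa using this
    have h2 := key u v
    have hA : ε' * |u + v| ^ t ≤ ε' * ((1 + ε') * |u| ^ t + C1 * |v| ^ t) :=
      mul_le_mul_of_nonneg_left h2 hε'pos.le
    have hB : ε' * (1 + ε') * |u| ^ t ≤ ε * |u| ^ t := mul_le_mul_of_nonneg_right hee hunn
    nlinarith [mul_nonneg hC1 hvnn, mul_nonneg hε'pos.le (mul_nonneg hC1 hvnn)]

lemma BL_two_pow (r : ℝ) (hr : 0 ≤ r) {A B : ℝ} (hA : 0 ≤ A) (hB : 0 ≤ B) :
    (A + B) ^ r ≤ 2 ^ r * (A ^ r + B ^ r) := by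
  have h1 : A + B ≤ 2 * max A B := by
    rcases le_total A B with h | h
    · simp [max_eq_right h]; linarith
    · simp [max_eq_left h]; linarith
  calc (A + B) ^ r ≤ (2 * max A B) ^ r :=
        Real.rpow_le_rpow (by positivity) h1 hr
    _ = 2 ^ r * max A B ^ r := Real.mul_rpow (by norm_num) (le_max_of_le_left hA)
    _ ≤ 2 ^ r * (A ^ r + B ^ r) := by
        apply mul_le_mul_of_nonneg_left _ (by positivity)
        rcases max_cases A B with ⟨h, _⟩ | ⟨h, _⟩ <;> rw [h]
        · exact le_add_of_nonneg_right (Real.rpow_nonneg hB _)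
        · exact le_add_of_nonneg_left (Real.rpow_nonneg hA _)



/-- Local Brezis–Lieb lemma, first part: if `1 < s`, `1 ≤ t ≤ s`, `(μn)` is a sequence of
measurable functions on `ℝ^N` bounded in `L^s` that converges almost everywhere to `μ`, then
`∫ | |μn|^t − |μn − μ|^t − |μ|^t |^{s/t} → 0`. -/
theorem stmt_1 (N : ℕ) (hN : 1 ≤ N) (s t : ℝ) (hs : 1 < s) (ht : 1 ≤ t) (hts : t ≤ s)
    (μn : ℕ → EuclideanSpace ℝ (Fin N) → ℝ) (μ : EuclideanSpace ℝ (Fin N) → ℝ)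
    (hmeas : ∀ n, Measurable (μn n)) (hμ : Measurable μ)
    (hbdd : ∃ M : ℝ≥0, ∀ n,
      ∫⁻ x, ENNReal.ofReal (|μn n x| ^ s) ∂volume ≤ M)
    (hae : ∀ᵐ x ∂(volume : Measure (EuclideanSpace ℝ (Fin N))),
      Tendsto (fun n => μn n x) atTop (𝓝 (μ x))) :
    Tendsto (fun n =>
        ∫ x, |(|μn n x| ^ t - |μn n x - μ x| ^ t - |μ x| ^ t)| ^ (s / t) ∂volume)
      atTop (𝓝 0) := by
  obtain ⟨M, hM⟩ := hbdd
  have ht0 : (0:ℝ) < t := lt_of_lt_of_le zero_lt_one ht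
  have hs0 : (0:ℝ) < s := lt_trans zero_lt_one hs
  set r : ℝ := s / t with hrdef
  have hr1 : 1 ≤ r := (le_div_iff₀ ht0).mpr (by linarith)
  have hr0 : 0 < r := by positivity
  have htr : t * r = s := by rw [hrdef]; field_simp
  -- measurability helpers
  have hmrpow : ∀ (f : EuclideanSpace ℝ (Fin N) → ℝ) (c : ℝ), 0 ≤ c → Measurable f →
      Measurable fun x => |f x| ^ c := fun f c hc hf =>
    (Real.continuous_rpow_const hc).measurable.comp hf.abs
  set g : ℕ → EuclideanSpace ℝ (Fin N) → ℝ :=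
    fun n x => |(|μn n x| ^ t - |μn n x - μ x| ^ t - |μ x| ^ t)| with hgdef
  have hgnn : ∀ n x, 0 ≤ g n x := fun n x => abs_nonneg _
  have hgm : ∀ n, Measurable (g n) := by
    intro n
    apply Measurable.abs
    exact ((hmrpow _ t ht0.le (hmeas n)).sub (hmrpow _ t ht0.le ((hmeas n).sub hμ))).sub
      (hmrpow _ t ht0.le hμ)
  set F : ℕ → EuclideanSpace ℝ (Fin N) → ℝ≥0∞ :=
    fun n x => ENNReal.ofReal (g n x ^ r) with hFdef
  have hFm : ∀ n, Measurable (F n) :=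
    fun n => ((Real.continuous_rpow_const hr0.le).measurable.comp (hgm n)).ennreal_ofReal
  -- rewrite the Bochner integral as toReal of a lintegral
  have hint : ∀ n, ∫ x, g n x ^ r ∂volume = (∫⁻ x, F n x ∂volume).toReal := by
    intro n
    apply integral_eq_lintegral_of_nonneg_ae
    · exact Filter.Eventually.of_forall fun x => Real.rpow_nonneg (hgnn n x) _
    · exact ((Real.continuous_rpow_const hr0.le).measurable.comp (hgm n)).aestronglyMeasurable
  have hgoal_eq : (fun n =>
        ∫ x, |(|μn n x| ^ t - |μn n x - μ x| ^ t - |μ x| ^ t)| ^ (s / t) ∂volume)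
      = fun n => (∫⁻ x, F n x ∂volume).toReal := funext hint
  rw [hgoal_eq]
  -- suffices: lintegrals tend to 0
  suffices hL : Tendsto (fun n => ∫⁻ x, F n x ∂volume) atTop (𝓝 0) by
    have := (ENNReal.tendsto_toReal (by simp)).comp hL
    simpa [Function.comp_def] using this
  -- a.e. pointwise convergence F n x → 0
  have hFae : ∀ᵐ x ∂(volume : Measure (EuclideanSpace ℝ (Fin N))),
      Tendsto (fun n => F n x) atTop (𝓝 0) := by
    filter_upwards [hae] with x hx
    have h1 : Tendsto (fun n => |μn n x| ^ t) atTop (𝓝 (|μ x| ^ t)) :=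
      (hx.abs).rpow_const (Or.inr ht0.le)
    have h2 : Tendsto (fun n => |μn n x - μ x| ^ t) atTop (𝓝 0) := by
      have : Tendsto (fun n => μn n x - μ x) atTop (𝓝 0) := by
        simpa using hx.sub_const (μ x)
      have := (this.abs).rpow_const (Or.inr ht0.le)
      simpa [Real.zero_rpow ht0.ne'] using this
    have h3 : Tendsto (fun n => g n x) atTop (𝓝 0) := by
      have : Tendsto (fun n => |μn n x| ^ t - |μn n x - μ x| ^ t - |μ x| ^ t) atTop
          (𝓝 (|μ x| ^ t - 0 - |μ x| ^ t)) := (h1.sub h2).sub tendsto_const_nhds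
      simp only [sub_zero, sub_self] at this
      simpa [hgdef] using this.abs
    have h4 : Tendsto (fun n => g n x ^ r) atTop (𝓝 0) := by
      have := h3.rpow_const (Or.inr hr0.le)
      simpa [Real.zero_rpow hr0.ne'] using this
    have := (ENNReal.continuous_ofReal.tendsto 0).comp h4
    simpa [hFdef, Function.comp_def] using this
  -- ∫⁻ |μ|^s ≤ M by Fatou
  have hμs : ∫⁻ x, ENNReal.ofReal (|μ x| ^ s) ∂volume ≤ M := by
    have heq : ∀ᵐ x ∂(volume : Measure (EuclideanSpace ℝ (Fin N))),
        ENNReal.ofReal (|μ x| ^ s)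
          = liminf (fun n => ENNReal.ofReal (|μn n x| ^ s)) atTop := by
      filter_upwards [hae] with x hx
      have h1 : Tendsto (fun n => |μn n x| ^ s) atTop (𝓝 (|μ x| ^ s)) :=
        (hx.abs).rpow_const (Or.inr hs0.le)
      exact ((ENNReal.continuous_ofReal.tendsto _).comp h1).liminf_eq.symm
    rw [lintegral_congr_ae heq]
    refine le_trans (lintegral_liminf_le fun n => (hmrpow _ s hs0.le (hmeas n)).ennreal_ofReal) ?_
    exact liminf_le_of_frequently_le (Filter.Frequently.of_forall hM)
  -- uniform bound on ∫⁻ |μn - μ|^s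
  set M2 : ℝ≥0∞ := ENNReal.ofReal (2 ^ s) * (M + M) with hM2def
  have hM2fin : M2 ≠ ∞ := by
    simp [hM2def, ENNReal.mul_ne_top, ENNReal.add_ne_top]
  have hdiff : ∀ n, ∫⁻ x, ENNReal.ofReal (|μn n x - μ x| ^ s) ∂volume ≤ M2 := by
    intro n
    have hpt : ∀ x, ENNReal.ofReal (|μn n x - μ x| ^ s)
        ≤ ENNReal.ofReal (2 ^ s) *
          (ENNReal.ofReal (|μn n x| ^ s) + ENNReal.ofReal (|μ x| ^ s)) := by
      intro x
      have h1 : |μn n x - μ x| ^ s ≤ 2 ^ s * (|μn n x| ^ s + |μ x| ^ s) := by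
        calc |μn n x - μ x| ^ s ≤ (|μn n x| + |μ x|) ^ s :=
              Real.rpow_le_rpow (abs_nonneg _) (abs_sub _ _) hs0.le
          _ ≤ _ := BL_two_pow s hs0.le (abs_nonneg _) (abs_nonneg _)
      calc ENNReal.ofReal (|μn n x - μ x| ^ s)
          ≤ ENNReal.ofReal (2 ^ s * (|μn n x| ^ s + |μ x| ^ s)) := ENNReal.ofReal_le_ofReal h1
        _ = _ := by
            rw [ENNReal.ofReal_mul (by positivity),
              ENNReal.ofReal_add (by positivity) (by positivity)]
    calc ∫⁻ x, ENNReal.ofReal (|μn n x - μ x| ^ s) ∂volume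
        ≤ ∫⁻ x, ENNReal.ofReal (2 ^ s) *
            (ENNReal.ofReal (|μn n x| ^ s) + ENNReal.ofReal (|μ x| ^ s)) ∂volume :=
          lintegral_mono hpt
      _ = ENNReal.ofReal (2 ^ s) *
            ∫⁻ x, (ENNReal.ofReal (|μn n x| ^ s) + ENNReal.ofReal (|μ x| ^ s)) ∂volume := by
          rw [lintegral_const_mul]
          exact ((hmrpow _ s hs0.le (hmeas n)).ennreal_ofReal).add
            ((hmrpow _ s hs0.le hμ).ennreal_ofReal)
      _ = ENNReal.ofReal (2 ^ s) *
            ((∫⁻ x, ENNReal.ofReal (|μn n x| ^ s) ∂volume)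
              + ∫⁻ x, ENNReal.ofReal (|μ x| ^ s) ∂volume) := by
          rw [lintegral_add_left ((hmrpow _ s hs0.le (hmeas n)).ennreal_ofReal)]
      _ ≤ M2 := by
          rw [hM2def]
          exact mul_le_mul_right (add_le_add (hM n) hμs) _
  -- main ε argument
  rw [ENNReal.tendsto_nhds_zero]
  intro η hη
  rcases eq_or_ne η ∞ with rfl | hηfin
  · exact Filter.Eventually.of_forall fun n => le_top
  have hη2pos : 0 < η / 2 := ENNReal.div_pos hη.ne' (by norm_num)
  have hη2fin : η / 2 ≠ ∞ := by
    exact (ENNReal.div_lt_top hηfin (by norm_num)).ne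
  -- choose ε
  set m : ℝ := M2.toReal with hmdef
  have hm0 : 0 ≤ m := ENNReal.toReal_nonneg
  set P : ℝ := 2 ^ r with hPdef
  have hP0 : 0 < P := by positivity
  set ηr : ℝ := (η / 2).toReal with hηrdef
  have hηr0 : 0 < ηr := ENNReal.toReal_pos hη2pos.ne' hη2fin
  set ε : ℝ := min 1 (ηr / (P * (m + 1))) with hεdef
  have hε0 : 0 < ε := lt_min zero_lt_one (by positivity)
  have hε1 : ε ≤ 1 := min_le_left _ _
  have hεr : ε ^ r ≤ ε := by
    have := Real.rpow_le_rpow_of_exponent_ge hε0 hε1 hr1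
    simpa using this
  have hkey : P * ε ^ r * m ≤ ηr := by
    have h1 : ε ≤ ηr / (P * (m + 1)) := min_le_right _ _
    have h2 : ε * (P * (m + 1)) ≤ ηr := by
      rw [← le_div_iff₀ (by positivity)]; exact h1
    nlinarith [mul_le_mul_of_nonneg_left hεr (le_of_lt hP0), mul_nonneg hP0.le hε0.le]
  -- get C from BL_eps
  obtain ⟨C, hC0, hCle⟩ := BL_eps t ht hε0
  set K : ℝ := C + 1 with hKdef
  have hK0 : 0 < K := by positivity
  -- pointwise bound on g^r
  have hpt : ∀ n x, g n x ^ r ≤ P * ε ^ r * |μn n x - μ x| ^ s + P * K ^ r * |μ x| ^ s := by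
    intro n x
    set a : ℝ := μn n x
    set b : ℝ := μ x
    have hub : g n x ≤ ε * |a - b| ^ t + K * |b| ^ t := by
      have h1 : abs (|a| ^ t - |a - b| ^ t) ≤ ε * |a - b| ^ t + C * |b| ^ t := by
        have := hCle (a - b) b
        simpa using this
      have h2 : g n x ≤ abs (|a| ^ t - |a - b| ^ t) + |b| ^ t := by
        have h3 : g n x = |(|a| ^ t - |a - b| ^ t) - |b| ^ t| := by simp [hgdef]; rfl
        rw [h3]
        have := abs_sub (|a| ^ t - |a - b| ^ t) (|b| ^ t)
        have h4 : |(|b| ^ t)| = |b| ^ t := abs_of_nonneg (Real.rpow_nonneg (abs_nonneg _) _)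
        linarith [abs_sub_abs_le_abs_sub (|a| ^ t - |a - b| ^ t) (|b| ^ t),
          abs_sub (|a| ^ t - |a - b| ^ t) (|b| ^ t)]
      calc g n x ≤ abs (|a| ^ t - |a - b| ^ t) + |b| ^ t := h2
        _ ≤ ε * |a - b| ^ t + C * |b| ^ t + |b| ^ t := by linarith
        _ = ε * |a - b| ^ t + K * |b| ^ t := by rw [hKdef]; ring
    have habt : (0:ℝ) ≤ |a - b| ^ t := Real.rpow_nonneg (abs_nonneg _) _
    have hbt : (0:ℝ) ≤ |b| ^ t := Real.rpow_nonneg (abs_nonneg _) _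
    calc g n x ^ r ≤ (ε * |a - b| ^ t + K * |b| ^ t) ^ r :=
          Real.rpow_le_rpow (hgnn n x) hub hr0.le
      _ ≤ 2 ^ r * ((ε * |a - b| ^ t) ^ r + (K * |b| ^ t) ^ r) :=
          BL_two_pow r hr0.le (by positivity) (by positivity)
      _ = P * ε ^ r * (|a - b| ^ t) ^ r + P * K ^ r * (|b| ^ t) ^ r := by
          rw [Real.mul_rpow hε0.le habt, Real.mul_rpow hK0.le hbt, hPdef]; ring
      _ = P * ε ^ r * |a - b| ^ s + P * K ^ r * |b| ^ s := by
          rw [← Real.rpow_mul (abs_nonneg _), ← Real.rpow_mul (abs_nonneg _), htr]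
  -- dominating function
  set h : EuclideanSpace ℝ (Fin N) → ℝ≥0∞ :=
    fun x => ENNReal.ofReal (P * K ^ r * |μ x| ^ s) with hhdef
  have hhm : Measurable h := by
    apply Measurable.ennreal_ofReal
    exact (hmrpow _ s hs0.le hμ).const_mul _
  have hhfin : ∫⁻ x, h x ∂volume ≠ ∞ := by
    have : ∫⁻ x, h x ∂volume
        = ENNReal.ofReal (P * K ^ r) * ∫⁻ x, ENNReal.ofReal (|μ x| ^ s) ∂volume := by
      simp only [hhdef]
      rw [← lintegral_const_mul _ ((hmrpow _ s hs0.le hμ).ennreal_ofReal)]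
      congr 1
      funext x
      rw [← ENNReal.ofReal_mul (by positivity)]
    rw [this]
    exact ENNReal.mul_ne_top ENNReal.ofReal_ne_top
      (lt_of_le_of_lt hμs ENNReal.coe_lt_top).ne
  -- split F n ≤ min (F n) h + (F n - h)
  have hsplit : ∀ n, ∫⁻ x, F n x ∂volume
      ≤ (∫⁻ x, min (F n x) (h x) ∂volume) + ∫⁻ x, F n x - h x ∂volume := by
    intro n
    rw [← lintegral_add_left ((hFm n).min hhm)]
    apply lintegral_mono
    intro x
    show F n x ≤ min (F n x) (h x) + (F n x - h x)
    rcases le_total (F n x) (h x) with hc | hc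
    · simp [min_eq_left hc]
    · rw [min_eq_right hc]
      exact le_tsub_add.trans (by rw [add_comm])
  -- term 2 estimate
  have hT2 : ∀ n, ∫⁻ x, F n x - h x ∂volume ≤ η / 2 := by
    intro n
    have hptE : ∀ x, F n x - h x ≤ ENNReal.ofReal (P * ε ^ r) *
        ENNReal.ofReal (|μn n x - μ x| ^ s) := by
      intro x
      rw [tsub_le_iff_right]
      calc F n x ≤ ENNReal.ofReal (P * ε ^ r * |μn n x - μ x| ^ s + P * K ^ r * |μ x| ^ s) :=
            ENNReal.ofReal_le_ofReal (hpt n x)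
        _ = ENNReal.ofReal (P * ε ^ r * |μn n x - μ x| ^ s) + h x := by
            rw [ENNReal.ofReal_add (by positivity) (by positivity)]
        _ = ENNReal.ofReal (P * ε ^ r) * ENNReal.ofReal (|μn n x - μ x| ^ s) + h x := by
            rw [← ENNReal.ofReal_mul (by positivity)]
    calc ∫⁻ x, F n x - h x ∂volume
        ≤ ∫⁻ x, ENNReal.ofReal (P * ε ^ r) * ENNReal.ofReal (|μn n x - μ x| ^ s) ∂volume :=
          lintegral_mono hptE
      _ = ENNReal.ofReal (P * ε ^ r) * ∫⁻ x, ENNReal.ofReal (|μn n x - μ x| ^ s) ∂volume :=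
          lintegral_const_mul _ ((hmrpow _ s hs0.le ((hmeas n).sub hμ)).ennreal_ofReal)
      _ ≤ ENNReal.ofReal (P * ε ^ r) * M2 := mul_le_mul_right (hdiff n) _
      _ ≤ η / 2 := by
          rcases eq_or_ne M2 0 with hz | hz
          · simp [hz]
          have hM2eq : M2 = ENNReal.ofReal m := (ENNReal.ofReal_toReal hM2fin).symm
          rw [hM2eq, ← ENNReal.ofReal_mul (by positivity)]
          calc ENNReal.ofReal (P * ε ^ r * m) ≤ ENNReal.ofReal ηr :=
                ENNReal.ofReal_le_ofReal hkey
            _ = η / 2 := ENNReal.ofReal_toReal hη2fin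
  -- term 1 tends to 0 by dominated convergence
  have hT1 : Tendsto (fun n => ∫⁻ x, min (F n x) (h x) ∂volume) atTop (𝓝 0) := by
    have := tendsto_lintegral_of_dominated_convergence (μ := volume)
      (F := fun n x => min (F n x) (h x)) (f := fun _ => 0) h
      (fun n => (hFm n).min hhm)
      (fun n => Filter.Eventually.of_forall fun x => min_le_right _ _)
      hhfin ?_
    · simpa using this
    · filter_upwards [hFae] with x hx
      have h0 : Tendsto (fun _ : ℕ => (0:ℝ≥0∞)) atTop (𝓝 0) := tendsto_const_nhds
      exact tendsto_of_tendsto_of_tendsto_of_le_of_le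
        (f := fun n => min (F n x) (h x)) h0 hx
        (fun n => zero_le) (fun n => min_le_left _ _)
  -- conclude
  have hev : ∀ᶠ n in atTop, ∫⁻ x, min (F n x) (h x) ∂volume ≤ η / 2 :=
    (ENNReal.tendsto_nhds_zero.mp hT1) (η / 2) hη2pos
  filter_upwards [hev] with n hn
  calc ∫⁻ x, F n x ∂volume
      ≤ (∫⁻ x, min (F n x) (h x) ∂volume) + ∫⁻ x, F n x - h x ∂volume := hsplit n
    _ ≤ η / 2 + η / 2 := add_le_add hn (hT2 n)
    _ = η := ENNReal.add_halves η
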